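/- Let G be a d-regular graph with girth 5. Then the vertices of G can be properly colored with d+1 colors in such a way that there exists a vertex x of G such that x and ⌈(d-1)/2⌉ + 1 of its neighbors are all dominant vertices of pairwise distinct colors. -/
import Mathlib


open SimpleGraph

variable {V : Type*} [Fintype V] [DecidableEq V]

/-- In a proper coloring `c` with `k` colors, a vertex is dominant if it has a
neighbor in every color class other than its own. -/
def IsDominant {k : ℕ} (G : SimpleGraph V) (c : V → Fin k) (v : V) : Prop :=
  ∀ j : Fin k, j ≠ c v → ∃ u, G.Adj v u ∧ c u = j

/-- `c` is a proper coloring. -/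
def ProperColoring {k : ℕ} (G : SimpleGraph V) (c : V → Fin k) : Prop :=
  ∀ u v, G.Adj u v → c u ≠ c v

/-- A b-coloring: proper, and every color class contains a dominant vertex. -/
def IsBColoring {k : ℕ} (G : SimpleGraph V) (c : V → Fin k) : Prop :=
  ProperColoring G c ∧ ∀ j : Fin k, ∃ v, c v = j ∧ IsDominant G c v

/-- The b-chromatic number: largest `k` admitting a b-coloring with `k` colors. -/
noncomputable def bNum (G : SimpleGraph V) : ℕ :=
  sSup {k | ∃ c : V → Fin k, IsBColoring G c}

/-- Number of colors possessing a dominant vertex in the coloring `c`. -/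
noncomputable def domColors {k : ℕ} (G : SimpleGraph V) (c : V → Fin k) : ℕ :=
  Nat.card {j : Fin k // ∃ v, c v = j ∧ IsDominant G c v}

/-- The f-chromatic vertex number of a d-regular graph: the maximum number of
colors having a dominant vertex, over proper (d+1)-colorings. -/
noncomputable def fNum (G : SimpleGraph V) (d : ℕ) : ℕ :=
  sSup {m | ∃ c : V → Fin (d+1), ProperColoring G c ∧ m = domColors G c}

/-- `G` contains no cycle of length `n`. -/
def NoCycleOfLength (G : SimpleGraph V) (n : ℕ) : Prop :=
  ∀ (v : V) (w : G.Walk v v), w.IsCycle → w.length ≠ n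

/-- `⌈n/2⌉` for a natural number `n`. -/
def ceilHalf (n : ℕ) : ℕ := (n + 1) / 2

set_option maxHeartbeats 1000000
set_option linter.unusedSectionVars false

lemma girth_cycle_ge {G : SimpleGraph V} (hg : G.girth = 5) :
    ∀ (a : V) (w : G.Walk a a), w.IsCycle → 5 ≤ w.length := by
  have hac : ¬ G.IsAcyclic := by
    intro h; rw [h.girth_eq_zero] at hg; omega
  have hne : G.egirth ≠ ⊤ := egirth_eq_top.not.mpr hac
  have h5 : G.egirth = (5 : ℕ∞) := by
    have h := ENat.coe_toNat hne
    rw [show G.egirth.toNat = 5 from hg] at h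
    exact h.symm
  intro a w hw
  have := le_egirth.mp (le_of_eq h5.symm) a w hw
  exact_mod_cast this

lemma no_triangle {G : SimpleGraph V} (hg : G.girth = 5) {a b c : V} (hab : G.Adj a b)
    (hbc : G.Adj b c) (hca : G.Adj c a) : False := by
  have hcyc : (Walk.cons hab (Walk.cons hbc (Walk.cons hca Walk.nil))).IsCycle := by
    rw [Walk.cons_isCycle_iff]
    constructor
    · rw [Walk.isPath_def]
      simp only [Walk.support_cons, Walk.support_nil, List.nodup_cons]
      have := hab.ne; have := hbc.ne; have := hca.ne
      simp_all [eq_comm]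
    · simp only [Walk.edges_cons, Walk.edges_nil, List.mem_cons, Sym2.eq, Sym2.rel_iff',
        Prod.mk.injEq, Prod.swap_prod_mk, List.not_mem_nil]
      have := hab.ne; have := hbc.ne; have := hca.ne
      aesop
  have := girth_cycle_ge hg a _ hcyc
  simp [Walk.length_cons] at this

lemma no_square {G : SimpleGraph V} (hg : G.girth = 5) {a b c e : V} (hab : G.Adj a b)
    (hbc : G.Adj b c) (hce : G.Adj c e) (hea : G.Adj e a) (hac : a ≠ c) (hbe : b ≠ e) :
    False := by
  have hcyc : (Walk.cons hab (Walk.cons hbc (Walk.cons hce (Walk.cons hea Walk.nil)))).IsCycle := by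
    rw [Walk.cons_isCycle_iff]
    constructor
    · rw [Walk.isPath_def]
      simp only [Walk.support_cons, Walk.support_nil, List.nodup_cons]
      have := hab.ne; have := hbc.ne; have := hce.ne; have := hea.ne
      simp_all [eq_comm]
    · simp only [Walk.edges_cons, Walk.edges_nil, List.mem_cons, Sym2.eq, Sym2.rel_iff',
        Prod.mk.injEq, Prod.swap_prod_mk, List.not_mem_nil]
      have := hab.ne; have := hbc.ne; have := hce.ne; have := hea.ne
      aesop
  have := girth_cycle_ge hg a _ hcyc
  simp [Walk.length_cons] at this

/-- The `j`-th group: neighbors of `vn j` other than the root `x`. -/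
def grp (G : SimpleGraph V) [DecidableRel G.Adj] (x : V) (vn : ℕ → V) (d j : ℕ) : Finset V :=
  if j < d then (G.neighborFinset (vn j)).erase x else ∅

/-- Domain after coloring the root, its neighbors, and the first `k` groups. -/
def domF (G : SimpleGraph V) [DecidableRel G.Adj] (x : V) (vn : ℕ → V) (d k : ℕ) : Finset V :=
  insert x ((G.neighborFinset x) ∪ (Finset.range k).biUnion (grp G x vn d))

lemma mem_grp {G : SimpleGraph V} [DecidableRel G.Adj] {x : V} {vn : ℕ → V} {d j : ℕ}
    (hj : j < d) {a : V} : a ∈ grp G x vn d j ↔ a ≠ x ∧ G.Adj (vn j) a := by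
  simp [grp, hj, Finset.mem_erase]

lemma build_coloring (G : SimpleGraph V) [DecidableRel G.Adj] (d : ℕ) (hd : 1 ≤ d)
    (hreg : G.IsRegularOfDegree d) (hg : G.girth = 5) (x : V) (vn : ℕ → V)
    (hvadj : ∀ j, j < d → G.Adj x (vn j))
    (hvinj : ∀ i, i < d → ∀ j, j < d → vn i = vn j → i = j)
    (hvsurj : ∀ w, G.Adj x w → ∃ j, j < d ∧ vn j = w) :
    ∀ k, k ≤ d/2 + 1 →
    ∃ c : V → Fin (d+1),
      c x = 0 ∧
      (∀ j, j < d → (c (vn j) : ℕ) = j + 1) ∧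
      (∀ j, j < k → ∀ a ∈ grp G x vn d j, ∀ b ∈ grp G x vn d j, c a = c b → a = b) ∧
      (∀ j, j < k → ∀ a ∈ grp G x vn d j, (c a : ℕ) ≠ 0 ∧ (c a : ℕ) ≠ j + 1) ∧
      (∀ a ∈ domF G x vn d k, ∀ b ∈ domF G x vn d k, G.Adj a b → c a ≠ c b) := by
  -- structural facts
  have htri : ∀ a b : V, G.Adj x a → G.Adj x b → ¬ G.Adj a b := by
    intro a b h1 h2 h3
    exact no_triangle hg h1 h3 h2.symm
  have hgdisj : ∀ i j, i < d → j < d → i ≠ j → ∀ a, a ∈ grp G x vn d i →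
      a ∈ grp G x vn d j → False := by
    intro i j hi hj hij a hai haj
    rw [mem_grp hi] at hai
    rw [mem_grp hj] at haj
    exact no_square hg (hvadj i hi) hai.2 haj.2.symm (hvadj j hj).symm
      (fun h => hai.1 h.symm) (fun h => hij (hvinj i hi j hj h))
  have hvnot : ∀ i j, i < d → j < d → vn i ∉ grp G x vn d j := by
    intro i j hi hj hmem
    rw [mem_grp hj] at hmem
    rcases eq_or_ne i j with rfl | hij
    · exact G.irrefl hmem.2
    · exact htri (vn j) (vn i) (hvadj j hj) (hvadj i hi) hmem.2
  have hnbdisj : ∀ a, G.Adj x a → ∀ j, j < d → a ∉ grp G x vn d j := by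
    intro a ha j hj hmem
    rw [mem_grp hj] at hmem
    exact htri (vn j) a (hvadj j hj) ha hmem.2
  have hgindep : ∀ j, j < d → ∀ a ∈ grp G x vn d j, ∀ b ∈ grp G x vn d j,
      ¬ G.Adj a b := by
    intro j hj a ha b hb hab
    rw [mem_grp hj] at ha hb
    exact no_triangle hg ha.2 hab hb.2.symm
  have honce : ∀ (w u1 u2 : V) (j : ℕ), j < d → u1 ∈ grp G x vn d j → u2 ∈ grp G x vn d j →
      u1 ≠ u2 → G.Adj w u1 → G.Adj w u2 → w = vn j := by
    intro w u1 u2 j hj h1 h2 h12 hw1 hw2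
    by_contra hw
    rw [mem_grp hj] at h1 h2
    exact no_square hg hw1 h1.2.symm h2.2 hw2.symm hw h12
  have hAkcard : ∀ j, j < d → (grp G x vn d j).card = d - 1 := by
    intro j hj
    rw [grp, if_pos hj, Finset.card_erase_of_mem
      ((G.mem_neighborFinset _ _).mpr (hvadj j hj).symm)]
    rw [G.card_neighborFinset_eq_degree, hreg (vn j)]
  -- induction
  intro k
  induction k with
  | zero =>
    intro _
    have hvnx : ∀ j, j < d → vn j ≠ x := by
      intro j hj h
      exact G.irrefl (h ▸ hvadj j hj)
    classical
    set c0 : V → Fin (d+1) := fun w =>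
      if h : ∃ j, j < d ∧ vn j = w then ⟨Nat.find h + 1, by have := (Nat.find_spec h).1; omega⟩
      else 0 with hc0
    have hc0x : c0 x = 0 := by
      rw [hc0]; dsimp only
      rw [dif_neg]
      rintro ⟨j, hj, hjx⟩
      exact hvnx j hj hjx
    have hc0v : ∀ j, j < d → (c0 (vn j) : ℕ) = j + 1 := by
      intro j hj
      have hex : ∃ i, i < d ∧ vn i = vn j := ⟨j, hj, rfl⟩
      rw [hc0]; dsimp only
      rw [dif_pos hex]
      have h1 := Nat.find_spec hex
      have h2 : Nat.find hex = j := hvinj _ h1.1 _ hj h1.2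
      simp [h2]
    refine ⟨c0, hc0x, hc0v, fun j hj => absurd hj (Nat.not_lt_zero j),
      fun j hj => absurd hj (Nat.not_lt_zero j), ?_⟩
    intro a ha b hb hadj
    simp only [domF, Finset.range_zero, Finset.biUnion_empty, Finset.union_empty,
      Finset.mem_insert, mem_neighborFinset] at ha hb
    rcases ha with rfl | ha <;> rcases hb with rfl | hb
    · exact absurd hadj (G.irrefl)
    · obtain ⟨j, hj, rfl⟩ := hvsurj b hb
      rw [hc0x]
      intro h
      have := congrArg (Fin.val) h
      rw [hc0v j hj] at this
      simp at this
    · obtain ⟨j, hj, rfl⟩ := hvsurj a ha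
      intro h
      have := congrArg (Fin.val) h
      rw [hc0v j hj, hc0x] at this
      simp at this
    · exact absurd hadj (htri a b ha hb)
  | succ k ih =>
    intro hk1
    obtain ⟨c, hcx, hcv, hinj, hcol, hprop⟩ := ih (by omega)
    have hk2 : k ≤ d/2 := by omega
    have hkd : k < d := by omega
    classical
    set Ak := grp G x vn d k with hAkdef
    set Bk := (Finset.range k).biUnion (grp G x vn d) with hBkdef
    have hmemAk : ∀ a : V, a ∈ Ak ↔ a ≠ x ∧ G.Adj (vn k) a := fun a => mem_grp hkd
    set ck : Fin (d+1) := ⟨k+1, by omega⟩ with hck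
    set Cs : Finset (Fin (d+1)) := Finset.univ \ {0, ck} with hCsdef
    set Fb : V → Finset (Fin (d+1)) := fun u => ((G.neighborFinset u) ∩ Bk).image c with hFbdef
    set L : V → Finset (Fin (d+1)) := fun u => Cs \ Fb u with hLdef
    have hCscard : Cs.card = d - 1 := by
      rw [hCsdef, Finset.card_sdiff_of_subset (Finset.subset_univ _)]
      have h2 : ({0, ck} : Finset (Fin (d+1))).card = 2 := by
        rw [Finset.card_insert_of_notMem, Finset.card_singleton]
        simp [hck, Fin.ext_iff]
      rw [h2, Finset.card_univ, Fintype.card_fin]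
      omega
    have hBkmem : ∀ w : V, w ∈ Bk ↔ ∃ j, j < k ∧ w ∈ grp G x vn d j := by
      intro w
      simp [hBkdef, Finset.mem_biUnion, Finset.mem_range]
    have hFcard : ∀ u ∈ Ak, (Fb u).card ≤ k := by
      intro u hu
      have hsub : (G.neighborFinset u ∩ Bk) =
          (Finset.range k).biUnion (fun j => G.neighborFinset u ∩ grp G x vn d j) := by
        ext a
        simp only [Finset.mem_inter, hBkdef, Finset.mem_biUnion, Finset.mem_range]
        tauto
      calc (Fb u).card ≤ (G.neighborFinset u ∩ Bk).card := Finset.card_image_le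
        _ ≤ ∑ j ∈ Finset.range k, (G.neighborFinset u ∩ grp G x vn d j).card := by
            rw [hsub]; exact Finset.card_biUnion_le
        _ ≤ ∑ _j ∈ Finset.range k, 1 := by
            refine Finset.sum_le_sum ?_
            intro j hj
            have hjd : j < d := lt_trans (Finset.mem_range.mp hj) hkd
            apply Finset.card_le_one.mpr
            intro a ha b hb
            rw [Finset.mem_inter, mem_neighborFinset] at ha hb
            by_contra hne
            have hwu := honce u a b j hjd ha.2 hb.2 hne ha.1 hb.1
            exact hvnot j k hjd hkd (hwu ▸ hu)
        _ = k := by simp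
    have hhall : ∀ S : Finset ↥Ak, S.card ≤ (S.biUnion (fun u => L (↑u : V))).card := by
      intro S
      by_contra hlt'
      push_neg at hlt'
      set N := S.biUnion (fun u => L (↑u : V)) with hNdef
      set D := Cs \ N with hDdef
      have hlt : N.card < S.card := hlt'
      have hSne : S.Nonempty := Finset.card_pos.mp (by omega)
      obtain ⟨u0, hu0⟩ := hSne
      have hsubD : ∀ u : ↥Ak, u ∈ S → D ⊆ Fb (↑u : V) := by
        intro u hu q hq
        rw [hDdef, Finset.mem_sdiff] at hq
        have hLsub : L (↑u : V) ⊆ N := Finset.subset_biUnion_of_mem (fun u : ↥Ak => L (↑u : V)) hu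
        have hnL : q ∉ L (↑u : V) := fun h => hq.2 (hLsub h)
        rw [hLdef] at hnL
        simp only [Finset.mem_sdiff, not_and, not_not] at hnL
        exact hnL hq.1
      have hDcard : D.card ≤ k := le_trans (Finset.card_le_card (hsubD u0 hu0)) (hFcard _ u0.2)
      have hScard : S.card ≤ d - 1 := by
        calc S.card ≤ (Finset.univ : Finset ↥Ak).card := Finset.card_le_univ S
          _ = Ak.card := by rw [Finset.card_univ, Fintype.card_coe]
          _ = d - 1 := hAkcard k hkd
      have hCsub : d - 1 ≤ N.card + D.card := by
        rw [← hCscard]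
        refine le_trans (Finset.card_le_card (fun q hq => ?_)) (Finset.card_union_le _ _)
        rw [Finset.mem_union]
        by_cases h : q ∈ N
        · exact Or.inl h
        · exact Or.inr (by rw [hDdef, Finset.mem_sdiff]; exact ⟨hq, h⟩)
      have hqcount : ∀ q : Fin (d+1), q ∈ D →
          S.card ≤ ((Finset.range k).filter (fun j => (q : ℕ) ≠ j+1)).card := by
        intro q hqD
        set W := Bk.filter (fun w => c w = q) with hWdef
        have hexw : ∀ u : ↥Ak, u ∈ S → ((G.neighborFinset (↑u : V)) ∩ W).Nonempty := by
          intro u hu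
          have hqF : q ∈ Fb (↑u : V) := hsubD u hu hqD
          rw [hFbdef] at hqF
          obtain ⟨w, hw, hcw⟩ := Finset.mem_image.mp hqF
          rw [Finset.mem_inter] at hw
          exact ⟨w, Finset.mem_inter.mpr ⟨hw.1, Finset.mem_filter.mpr ⟨hw.2, hcw⟩⟩⟩
        set f : ↥Ak → V := fun u =>
          if h : ((G.neighborFinset (↑u : V)) ∩ W).Nonempty then h.choose else x with hfdef
        have hfmem : ∀ u : ↥Ak, u ∈ S → f u ∈ W ∧ G.Adj (↑u : V) (f u) := by
          intro u hu
          have h := hexw u hu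
          rw [hfdef]; dsimp only
          rw [dif_pos h]
          have hsp := h.choose_spec
          rw [Finset.mem_inter, mem_neighborFinset] at hsp
          exact ⟨hsp.2, hsp.1⟩
        have hSW : S.card ≤ W.card := by
          apply Finset.card_le_card_of_injOn f (fun u hu => (hfmem u hu).1)
          intro u1 hu1 u2 hu2 heq
          by_contra hne
          have hne' : (↑u1 : V) ≠ (↑u2 : V) := fun h => hne (Subtype.ext h)
          have h1 := hfmem u1 (by exact hu1)
          have h2 := hfmem u2 (by exact hu2)
          have hadj2 : G.Adj (f u1) (↑u2 : V) := by rw [heq]; exact h2.2.symm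
          have hwvn : f u1 = vn k := honce (f u1) (↑u1) (↑u2) k hkd u1.2 u2.2 hne' h1.2.symm hadj2
          have hmemB : f u1 ∈ Bk := (Finset.mem_filter.mp h1.1).1
          obtain ⟨j, hjk, hjm⟩ := (hBkmem _).mp hmemB
          exact hvnot k j hkd (lt_trans hjk hkd) (hwvn ▸ hjm)
        have hWcount : W.card ≤ ((Finset.range k).filter (fun j => (q:ℕ) ≠ j+1)).card := by
          have hWsub : W ⊆ (Finset.range k).biUnion
              (fun j => (grp G x vn d j).filter (fun w => c w = q)) := by
            intro w hw
            rw [hWdef, Finset.mem_filter] at hw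
            obtain ⟨j, hjk, hjm⟩ := (hBkmem w).mp hw.1
            exact Finset.mem_biUnion.mpr ⟨j, Finset.mem_range.mpr hjk,
              Finset.mem_filter.mpr ⟨hjm, hw.2⟩⟩
          refine le_trans (Finset.card_le_card hWsub) (le_trans Finset.card_biUnion_le ?_)
          rw [Finset.card_filter]
          refine Finset.sum_le_sum ?_
          intro j hj
          have hjk := Finset.mem_range.mp hj
          by_cases hcase : (q:ℕ) ≠ j + 1
          · rw [if_pos hcase]
            apply Finset.card_le_one.mpr
            intro a ha b hb
            rw [Finset.mem_filter] at ha hb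
            exact hinj j hjk a ha.1 b hb.1 (ha.2.trans hb.2.symm)
          · rw [if_neg hcase]
            push_neg at hcase
            rw [Nat.le_zero, Finset.card_eq_zero, Finset.eq_empty_iff_forall_notMem]
            intro a ha
            rw [Finset.mem_filter] at ha
            exact (hcol j hjk a ha.1).2 (by rw [ha.2, hcase])
        exact le_trans hSW hWcount
      have hDne : D.Nonempty := Finset.card_pos.mp (by omega)
      obtain ⟨q0, hq0⟩ := hDne
      by_cases hcase : ∃ q ∈ D, ∃ j, j < k ∧ (q : ℕ) = j + 1
      · obtain ⟨q, hqD, j0, hj0, hqv⟩ := hcase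
        have h1 := hqcount q hqD
        have h2 : ((Finset.range k).filter (fun j => (q:ℕ) ≠ j+1)).card ≤ k - 1 := by
          have hsub : (Finset.range k).filter (fun j => (q:ℕ) ≠ j+1) ⊆
              (Finset.range k).erase j0 := by
            intro a ha
            rw [Finset.mem_filter] at ha
            exact Finset.mem_erase.mpr ⟨fun h => ha.2 (h ▸ hqv), ha.1⟩
          refine le_trans (Finset.card_le_card hsub) ?_
          rw [Finset.card_erase_of_mem (Finset.mem_range.mpr hj0), Finset.card_range]
        omega
      · push_neg at hcase
        set gg : ℕ → Fin (d+1) := fun j => if h : j < k then ⟨j+1, by omega⟩ else 0 with hggdef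
        have hggval : ∀ j, j < k → (gg j : ℕ) = j + 1 := by
          intro j hj
          rw [hggdef]; dsimp only
          rw [dif_pos hj]
        have hgmem : ∀ j, j < k → gg j ∈ N := by
          intro j hjk
          have hCsm : gg j ∈ Cs := by
            rw [hCsdef, Finset.mem_sdiff]
            refine ⟨Finset.mem_univ _, ?_⟩
            simp only [Finset.mem_insert, Finset.mem_singleton, Fin.ext_iff, hck]
            push_neg
            have := hggval j hjk
            constructor
            · intro h0
              have : (gg j : ℕ) = 0 := by rw [h0]; rfl
              omega
            · intro h0
              omega
          by_contra hnot
          have hmD : gg j ∈ D := by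
            rw [hDdef, Finset.mem_sdiff]; exact ⟨hCsm, hnot⟩
          exact hcase _ hmD j hjk (hggval j hjk)
        have hkN : k ≤ N.card := by
          have hinjg := Finset.card_le_card_of_injOn gg
            (fun j hj => hgmem j (Finset.mem_range.mp hj))
            (fun j1 hj1 j2 hj2 heq => by
              rw [Finset.mem_coe, Finset.mem_range] at hj1 hj2
              have h1 := hggval j1 hj1
              have h2 := hggval j2 hj2
              rw [heq] at h1
              omega)
          rwa [Finset.card_range] at hinjg
        have hfin := hqcount q0 hq0
        have hle : ((Finset.range k).filter (fun j => ((q0:ℕ) ≠ j+1))).card ≤ k := by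
          refine le_trans (Finset.card_le_card (Finset.filter_subset _ _)) ?_
          rw [Finset.card_range]
        omega
    obtain ⟨f, hfinj, hfL⟩ := (Finset.all_card_le_biUnion_card_iff_exists_injective
      (fun u : ↥Ak => L (↑u : V))).mp hhall
    set c2 : V → Fin (d+1) := fun w => if h : w ∈ Ak then f ⟨w, h⟩ else c w with hc2def
    have hc2Ak : ∀ a (h : a ∈ Ak), c2 a ∈ Cs ∧ c2 a ∉ Fb a := by
      intro a h
      rw [hc2def]; dsimp only
      rw [dif_pos h]
      have hm := hfL ⟨a, h⟩
      rw [hLdef] at hm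
      exact Finset.mem_sdiff.mp hm
    have hc2out : ∀ a, a ∉ Ak → c2 a = c a := by
      intro a h
      rw [hc2def]; dsimp only; rw [dif_neg h]
    have hxAk : x ∉ Ak := fun h => ((hmemAk x).mp h).1 rfl
    have hvnAk : ∀ j, j < d → vn j ∉ Ak := fun j hj => hvnot j k hj hkd
    have hdomAk : ∀ a, a ∈ domF G x vn d k → a ∉ Ak := by
      intro a ha hA
      rw [domF, Finset.mem_insert] at ha
      rcases ha with rfl | ha
      · exact hxAk hA
      rw [Finset.mem_union] at ha
      rcases ha with ha | ha
      · exact hnbdisj a ((G.mem_neighborFinset _ _).mp ha) k hkd hA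
      · obtain ⟨j, hjk, hjm⟩ := (hBkmem a).mp ha
        exact hgdisj j k (lt_trans hjk hkd) hkd (by omega) a hjm hA
    have hc2dom : ∀ a, a ∈ domF G x vn d k → c2 a = c a := fun a ha => hc2out a (hdomAk a ha)
    have hCsne : ∀ p : Fin (d+1), p ∈ Cs → p ≠ 0 ∧ p ≠ ck := by
      intro p hp
      rw [hCsdef, Finset.mem_sdiff] at hp
      have := hp.2
      simp only [Finset.mem_insert, Finset.mem_singleton] at this
      push_neg at this
      exact this
    refine ⟨c2, ?_, ?_, ?_, ?_, ?_⟩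
    · rw [hc2out x hxAk]; exact hcx
    · intro j hj; rw [hc2out _ (hvnAk j hj)]; exact hcv j hj
    · intro j hjk1 a ha b hb heq
      rcases Nat.lt_succ_iff_lt_or_eq.mp hjk1 with hjk | rfl
      · have hna : a ∉ Ak := fun hA => hgdisj j k (lt_trans hjk hkd) hkd (by omega) a ha hA
        have hnb : b ∉ Ak := fun hA => hgdisj j k (lt_trans hjk hkd) hkd (by omega) b hb hA
        rw [hc2out a hna, hc2out b hnb] at heq
        exact hinj j hjk a ha b hb heq
      · have ha' : a ∈ Ak := by rw [hAkdef]; exact ha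
        have hb' : b ∈ Ak := by rw [hAkdef]; exact hb
        rw [hc2def] at heq; dsimp only at heq
        rw [dif_pos ha', dif_pos hb'] at heq
        exact congrArg Subtype.val (hfinj heq)
    · intro j hjk1 a ha
      rcases Nat.lt_succ_iff_lt_or_eq.mp hjk1 with hjk | rfl
      · have hna : a ∉ Ak := fun hA => hgdisj j k (lt_trans hjk hkd) hkd (by omega) a ha hA
        rw [hc2out a hna]
        exact hcol j hjk a ha
      · have ha' : a ∈ Ak := by rw [hAkdef]; exact ha
        have h2 := hCsne _ (hc2Ak a ha').1
        constructor
        · intro hv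
          exact h2.1 (Fin.ext (by simpa using hv))
        · intro hv
          exact h2.2 (Fin.ext (by rw [hck]; simpa using hv))
    · have hdomsucc : ∀ a, a ∈ domF G x vn d (k+1) ↔ a ∈ domF G x vn d k ∨ a ∈ Ak := by
        intro a
        simp only [domF, Finset.mem_insert, Finset.mem_union, Finset.mem_biUnion,
          Finset.mem_range, Nat.lt_succ_iff_lt_or_eq, hAkdef, hBkdef]
        constructor
        · rintro (rfl | h | ⟨j, hjk | rfl, hjm⟩)
          · exact Or.inl (Or.inl rfl)
          · exact Or.inl (Or.inr (Or.inl h))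
          · exact Or.inl (Or.inr (Or.inr ⟨j, hjk, hjm⟩))
          · exact Or.inr hjm
        · rintro ((rfl | h | ⟨j, hjk, hjm⟩) | h)
          · exact Or.inl rfl
          · exact Or.inr (Or.inl h)
          · exact Or.inr (Or.inr ⟨j, Or.inl hjk, hjm⟩)
          · exact Or.inr (Or.inr ⟨k, Or.inr rfl, h⟩)
      have hmain : ∀ a, a ∈ Ak → ∀ b, b ∈ domF G x vn d k → G.Adj a b → c2 a ≠ c2 b := by
        intro a haA b hb hadj
        have haCs := hc2Ak a haA
        rw [hc2dom b hb]
        rw [domF, Finset.mem_insert] at hb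
        rcases hb with hbx | hb
        · rw [hbx] at hadj
          exact absurd ((hmemAk a).mp haA).2 (htri (vn k) a (hvadj k hkd) hadj.symm)
        rw [Finset.mem_union] at hb
        rcases hb with hb | hb
        · obtain ⟨j, hjd, rfl⟩ := hvsurj b ((G.mem_neighborFinset _ _).mp hb)
          rcases eq_or_ne j k with rfl | hjk
          · have hcvk : c (vn j) = ck := Fin.ext (by rw [hck]; simpa using hcv j hkd)
            rw [hcvk]
            exact (hCsne _ haCs.1).2
          · have haa := (hmemAk a).mp haA
            exact (no_square hg (hvadj k hkd) haa.2 hadj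
              (hvadj j hjd).symm (Ne.symm haa.1)
              (fun h => hjk ((hvinj k hkd j hjd h).symm))).elim
        · intro heq
          apply haCs.2
          rw [hFbdef]
          have hbm : b ∈ G.neighborFinset a ∩ Bk :=
            Finset.mem_inter.mpr ⟨(G.mem_neighborFinset _ _).mpr hadj, hb⟩
          exact heq ▸ Finset.mem_image_of_mem c hbm
      intro a ha b hb hadj
      rcases (hdomsucc a).mp ha with ha' | ha' <;> rcases (hdomsucc b).mp hb with hb' | hb'
      · rw [hc2dom a ha', hc2dom b hb']
        exact hprop a ha' b hb' hadj
      · exact fun heq => hmain b hb' a ha' hadj.symm heq.symm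
      · exact hmain a ha' b hb' hadj
      · exact absurd hadj (hgindep k hkd a ha' b hb')

lemma extend_coloring (G : SimpleGraph V) [DecidableRel G.Adj] (d : ℕ)
    (hreg : G.IsRegularOfDegree d) :
    ∀ (n : ℕ) (dom : Finset V) (c : V → Fin (d+1)), domᶜ.card = n →
    (∀ a ∈ dom, ∀ b ∈ dom, G.Adj a b → c a ≠ c b) →
    ∃ c' : V → Fin (d+1), ProperColoring G c' ∧ ∀ w ∈ dom, c' w = c w := by
  intro n
  induction n with
  | zero =>
    intro dom c hcard hprop
    have hdom : dom = Finset.univ := by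
      have : domᶜ = ∅ := Finset.card_eq_zero.mp hcard
      rwa [Finset.compl_eq_empty_iff] at this
    refine ⟨c, ?_, fun w _ => rfl⟩
    intro u v huv
    exact hprop u (hdom ▸ Finset.mem_univ u) v (hdom ▸ Finset.mem_univ v) huv
  | succ m ih =>
    intro dom c hcard hprop
    have hne : domᶜ.Nonempty := by
      rw [← Finset.card_pos, hcard]; omega
    obtain ⟨w, hw⟩ := hne
    have hwdom : w ∉ dom := Finset.mem_compl.mp hw
    set T : Finset (Fin (d+1)) := ((G.neighborFinset w) ∩ dom).image c with hT
    have hTcard : T.card ≤ d := by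
      calc T.card ≤ ((G.neighborFinset w) ∩ dom).card := Finset.card_image_le
        _ ≤ (G.neighborFinset w).card := Finset.card_le_card (Finset.inter_subset_left)
        _ = d := hreg w
    have hex : ∃ q : Fin (d+1), q ∉ T := by
      by_contra h
      push_neg at h
      have hsub : (Finset.univ : Finset (Fin (d+1))) ⊆ T := fun q _ => h q
      have := Finset.card_le_card hsub
      simp at this
      omega
    obtain ⟨q, hq⟩ := hex
    set c2 : V → Fin (d+1) := Function.update c w q with hc2
    have hmemT : ∀ b ∈ dom, G.Adj w b → c b ∈ T := by
      intro b hb hadj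
      exact Finset.mem_image_of_mem c
        (Finset.mem_inter.mpr ⟨(G.mem_neighborFinset _ _).mpr hadj, hb⟩)
    have hstep : ∀ a ∈ insert w dom, ∀ b ∈ insert w dom, G.Adj a b → c2 a ≠ c2 b := by
      intro a ha b hb hadj
      by_cases haw : a = w <;> by_cases hbw : b = w
      · subst haw; exact absurd (hbw ▸ hadj) (G.irrefl)
      · subst haw
        have hb' : b ∈ dom := (Finset.mem_insert.mp hb).resolve_left hbw
        rw [hc2]
        simp only [Function.update_self, Function.update_of_ne hbw]
        exact fun h => hq (h ▸ hmemT b hb' hadj)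
      · subst hbw
        have ha' : a ∈ dom := (Finset.mem_insert.mp ha).resolve_left haw
        rw [hc2]
        simp only [Function.update_self, Function.update_of_ne haw]
        exact fun h => hq (h ▸ hmemT a ha' hadj.symm)
      · have ha' : a ∈ dom := (Finset.mem_insert.mp ha).resolve_left haw
        have hb' : b ∈ dom := (Finset.mem_insert.mp hb).resolve_left hbw
        rw [hc2]
        simp only [Function.update_of_ne haw, Function.update_of_ne hbw]
        exact hprop a ha' b hb' hadj
    have hcard2 : (insert w dom)ᶜ.card = m := by
      rw [Finset.compl_insert, Finset.card_erase_of_mem hw, hcard]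
      omega
    obtain ⟨c', hc', hagree⟩ := ih (insert w dom) c2 hcard2 hstep
    refine ⟨c', hc', fun u hu => ?_⟩
    rw [hagree u (Finset.mem_insert_of_mem hu), hc2]
    have huw : u ≠ w := fun h => hwdom (h ▸ hu)
    simp [Function.update_of_ne huw]

theorem exists_coloring_dominant_vertex_and_neighbors (G : SimpleGraph V)
    [DecidableRel G.Adj] (d : ℕ) (hreg : G.IsRegularOfDegree d) (hg : G.girth = 5) :
    ∃ (c : V → Fin (d + 1)) (x : V) (s : Finset V),
      ProperColoring G c ∧
      (∀ v ∈ s, G.Adj x v) ∧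
      s.card = ceilHalf (d - 1) + 1 ∧
      IsDominant G c x ∧ (∀ v ∈ s, IsDominant G c v) ∧
      Set.InjOn c (insert x (s : Set V)) := by
  classical
  -- G has a cycle, hence an edge, hence d ≥ 1
  have hac : ¬ G.IsAcyclic := by
    intro h
    rw [h.girth_eq_zero] at hg
    omega
  obtain ⟨x, w, hw, _⟩ := exists_girth_eq_length.mpr hac
  have hd : 1 ≤ d := by
    cases w with
    | nil => exact absurd rfl hw.ne_nil
    | cons h p =>
      have : _ ∈ G.neighborFinset x := (G.mem_neighborFinset _ _).mpr h
      have hpos : 0 < (G.neighborFinset x).card := Finset.card_pos.mpr ⟨_, this⟩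
      rw [G.card_neighborFinset_eq_degree, hreg x] at hpos
      exact hpos
  -- enumeration of the neighbors of x
  set nb := G.neighborFinset x with hnb
  have hcard : nb.card = d := by rw [hnb, G.card_neighborFinset_eq_degree, hreg x]
  set e := nb.equivFin with he
  set vn : ℕ → V := fun j => if h : j < d then (e.symm ⟨j, by rw [hcard]; exact h⟩ : V) else x
    with hvn
  have hvmem : ∀ j, j < d → vn j ∈ nb := by
    intro j hj
    rw [hvn]; dsimp only
    rw [dif_pos hj]
    exact (e.symm _).2
  have hvadj : ∀ j, j < d → G.Adj x (vn j) := by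
    intro j hj
    exact (G.mem_neighborFinset _ _).mp (hvmem j hj)
  have hvinj : ∀ i, i < d → ∀ j, j < d → vn i = vn j → i = j := by
    intro i hi j hj hij
    rw [hvn] at hij; dsimp only at hij
    rw [dif_pos hi, dif_pos hj] at hij
    have := e.symm.injective (Subtype.ext hij)
    simpa using this
  have hvsurj : ∀ u, G.Adj x u → ∃ j, j < d ∧ vn j = u := by
    intro u hu
    have hmem : u ∈ nb := (G.mem_neighborFinset _ _).mpr hu
    have hjd : (e ⟨u, hmem⟩ : ℕ) < d := by rw [← hcard]; exact (e ⟨u, hmem⟩).2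
    refine ⟨(e ⟨u, hmem⟩ : ℕ), hjd, ?_⟩
    rw [hvn]; dsimp only
    rw [dif_pos hjd]
    have h2 : e.symm ⟨(e ⟨u, hmem⟩ : ℕ), lt_of_lt_of_eq hjd hcard.symm⟩ = ⟨u, hmem⟩ :=
      e.symm_apply_eq.mpr (Fin.ext rfl)
    exact congrArg Subtype.val h2
  -- the number of groups
  set t := d/2 + 1 with ht
  have htd : t ≤ d := by omega
  -- build the partial coloring
  obtain ⟨c, hcx, hcv, hinj, hcol, hprop⟩ := build_coloring G d hd hreg hg x vn hvadj hvinj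
    hvsurj t (le_refl _)
  -- extend it greedily
  obtain ⟨c', hc'prop, hc'agree⟩ := extend_coloring G d hreg ((domF G x vn d t)ᶜ.card)
    (domF G x vn d t) c rfl hprop
  have hxdom : x ∈ domF G x vn d t := Finset.mem_insert_self _ _
  have hnbdom : ∀ u, u ∈ nb → u ∈ domF G x vn d t := by
    intro u hu
    rw [domF, Finset.mem_insert]
    exact Or.inr (Finset.mem_union.mpr (Or.inl hu))
  have hgrpdom : ∀ j, j < t → ∀ u ∈ grp G x vn d j, u ∈ domF G x vn d t := by
    intro j hj u hu
    rw [domF, Finset.mem_insert]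
    refine Or.inr (Finset.mem_union.mpr (Or.inr ?_))
    exact Finset.mem_biUnion.mpr ⟨j, Finset.mem_range.mpr hj, hu⟩
  have hc'x : c' x = 0 := by rw [hc'agree x hxdom, hcx]
  have hc'v : ∀ j, j < d → (c' (vn j) : ℕ) = j + 1 := by
    intro j hj
    rw [hc'agree _ (hnbdom _ (hvmem j hj))]
    exact hcv j hj
  -- the distinguished neighbors
  set s : Finset V := (Finset.range t).image vn with hs
  have hscard : s.card = t := by
    rw [hs, Finset.card_image_of_injOn, Finset.card_range]
    intro i hi j hj hij
    rw [Finset.mem_coe, Finset.mem_range] at hi hj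
    exact hvinj i (by omega) j (by omega) hij
  have hsmem : ∀ u ∈ s, ∃ j, j < t ∧ vn j = u := by
    intro u hu
    rw [hs] at hu
    obtain ⟨j, hj, hju⟩ := Finset.mem_image.mp hu
    exact ⟨j, Finset.mem_range.mp hj, hju⟩
  have hsadj : ∀ u ∈ s, G.Adj x u := by
    intro u hu
    obtain ⟨j, hj, rfl⟩ := hsmem u hu
    exact hvadj j (by omega)
  -- cardinality of each group
  have hgrpcard : ∀ j, j < d → (grp G x vn d j).card = d - 1 := by
    intro j hj
    rw [grp, if_pos hj, Finset.card_erase_of_mem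
      ((G.mem_neighborFinset _ _).mpr (hvadj j hj).symm)]
    rw [G.card_neighborFinset_eq_degree, hreg (vn j)]
  -- each group realizes all colors except 0 and j+1
  have hgrpcolor : ∀ j, j < t → ∀ q : Fin (d+1), (q : ℕ) ≠ 0 → (q : ℕ) ≠ j + 1 →
      ∃ u ∈ grp G x vn d j, c u = q := by
    intro j hj q hq0 hqj
    have hjd : j < d := by omega
    set T := (grp G x vn d j).image c with hT
    have hTcard : T.card = d - 1 := by
      rw [hT, Finset.card_image_of_injOn, hgrpcard j hjd]
      intro a ha b hb hab
      rw [Finset.mem_coe] at ha hb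
      exact hinj j hj a ha b hb hab
    set Csj : Finset (Fin (d+1)) := Finset.univ \ {0, ⟨j+1, by omega⟩} with hCsj
    have hCsjcard : Csj.card = d - 1 := by
      rw [hCsj, Finset.card_sdiff_of_subset (Finset.subset_univ _)]
      have h2 : ({0, (⟨j+1, by omega⟩ : Fin (d+1))} : Finset (Fin (d+1))).card = 2 := by
        rw [Finset.card_insert_of_notMem, Finset.card_singleton]
        simp [Fin.ext_iff]
      rw [h2, Finset.card_univ, Fintype.card_fin]
      omega
    have hsub : T ⊆ Csj := by
      intro p hp
      rw [hT] at hp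
      obtain ⟨a, ha, rfl⟩ := Finset.mem_image.mp hp
      have := hcol j hj a ha
      rw [hCsj, Finset.mem_sdiff]
      refine ⟨Finset.mem_univ _, ?_⟩
      simp only [Finset.mem_insert, Finset.mem_singleton, Fin.ext_iff]
      push_neg
      exact ⟨by simpa using this.1, by simpa using this.2⟩
    have hTeq : T = Csj := Finset.eq_of_subset_of_card_le hsub (by omega)
    have hqT : q ∈ T := by
      rw [hTeq, hCsj, Finset.mem_sdiff]
      refine ⟨Finset.mem_univ _, ?_⟩
      simp only [Finset.mem_insert, Finset.mem_singleton, Fin.ext_iff]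
      push_neg
      exact ⟨by simpa using hq0, by simpa using hqj⟩
    obtain ⟨u, hu, hcu⟩ := Finset.mem_image.mp hqT
    exact ⟨u, hu, hcu⟩
  -- conclude
  refine ⟨c', x, s, hc'prop, hsadj, ?_, ?_, ?_, ?_⟩
  · rw [hscard, ht]
    simp [ceilHalf]
    omega
  · -- x is dominant
    intro q hq
    rw [hc'x] at hq
    have hqv : (q : ℕ) ≠ 0 := fun h => hq (Fin.ext (by simpa using h))
    have hqd : (q : ℕ) < d + 1 := q.2
    refine ⟨vn ((q : ℕ) - 1), hvadj _ (by omega), ?_⟩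
    apply Fin.ext
    rw [hc'v _ (by omega)]
    omega
  · -- each chosen neighbor is dominant
    intro u hu
    obtain ⟨j, hj, rfl⟩ := hsmem u hu
    intro q hq
    have hcvj : (c' (vn j) : ℕ) = j + 1 := hc'v j (by omega)
    by_cases hq0 : (q : ℕ) = 0
    · refine ⟨x, (hvadj j (by omega)).symm, ?_⟩
      rw [hc'x]
      exact Fin.ext (by simpa using hq0.symm)
    · have hqj : (q : ℕ) ≠ j + 1 := by
        intro h
        exact hq (Fin.ext (by rw [hcvj, h]))
      obtain ⟨w, hw, hcw⟩ := hgrpcolor j hj q hq0 hqj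
      have hwadj : G.Adj (vn j) w := by
        have := (mem_grp (show j < d by omega)).mp hw
        exact this.2
      refine ⟨w, hwadj, ?_⟩
      rw [hc'agree _ (hgrpdom j hj w hw)]
      exact hcw
  · -- colors are pairwise distinct on {x} ∪ s
    intro a ha b hb heq
    simp only [Set.mem_insert_iff, Finset.mem_coe] at ha hb
    rcases ha with rfl | ha <;> rcases hb with rfl | hb
    · rfl
    · obtain ⟨j, hj, rfl⟩ := hsmem b hb
      have h1 : (c' (vn j) : ℕ) = j + 1 := hc'v j (by omega)
      rw [← heq, hc'x] at h1
      simp at h1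
    · obtain ⟨j, hj, rfl⟩ := hsmem a ha
      have h1 : (c' (vn j) : ℕ) = j + 1 := hc'v j (by omega)
      rw [heq, hc'x] at h1
      simp at h1
    · obtain ⟨j1, hj1, rfl⟩ := hsmem a ha
      obtain ⟨j2, hj2, rfl⟩ := hsmem b hb
      have h1 : (c' (vn j1) : ℕ) = j1 + 1 := hc'v j1 (by omega)
      have h2 : (c' (vn j2) : ℕ) = j2 + 1 := hc'v j2 (by omega)
      rw [heq] at h1
      have : j1 = j2 := by omega
      rw [this]
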